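/- Let A ⊆ X_i^* be computably enumerable and let g : A → X_2^* be a Gödel numbering. Then there exists a constant d such that for all u ∈ A, |δ_g(u) − log_2(i)·δ_i(u)| ≤ d. -/

import Mathlib

open scoped ENNReal

/-- Finite strings over an alphabet with `i` letters. -/
abbrev Str (i : ℕ) : Type := List (Fin i)

/-- A set of strings is prefix-free: no element is a proper prefix of another. -/
def PrefixFree {i : ℕ} (S : Set (Str i)) : Prop :=
  ∀ x ∈ S, ∀ y ∈ S, x <+: y → x = y

/-- A self-delimiting machine over the alphabet with `i` letters: a partial computable
function on strings whose domain is prefix-free. -/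
structure Machine (i : ℕ) where
  f : Str i →. Str i
  partrec : Partrec f
  prefixFree : PrefixFree f.Dom

/-- Program-size complexity of `x` relative to the machine `T`:
the least length of a program `y` with `T(y) = x` (with `min ∅ = ∞`). -/
noncomputable def Hc {i : ℕ} (T : Machine i) (x : Str i) : ℝ≥0∞ :=
  sInf {n : ℝ≥0∞ | ∃ y : Str i, (y.length : ℝ≥0∞) = n ∧ x ∈ T.f y}

/-- `U` is a universal machine: it minimizes program-size complexity up to an
additive constant among all machines. -/
def IsUniversal {i : ℕ} (U : Machine i) : Prop :=
  ∀ T : Machine i, ∃ c : ℕ, ∀ x : Str i, Hc U x ≤ Hc T x + (c : ℝ≥0∞)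

/-- A set of strings is computably enumerable if it is the domain of a
partial computable function. -/
def CEset {i : ℕ} (A : Set (Str i)) : Prop :=
  ∃ f : Str i →. Str i, Partrec f ∧ A = f.Dom

/-- A Gödel numbering for `L`: a computable function into binary strings,
injective on `L`. -/
def GoedelNumbering {i : ℕ} (L : Set (Str i)) (g : Str i → Str 2) : Prop :=
  Computable g ∧ Set.InjOn g L

/-- `δ_g(x) = H₂(g(x)) − ⌈log₂(i)·|x|ᵢ⌉`, as an extended real. -/
noncomputable def deltaG {i : ℕ} (U2 : Machine 2) (g : Str i → Str 2) (x : Str i) : EReal :=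
  (Hc U2 (g x) : EReal) - ((⌈Real.logb 2 i * (x.length : ℝ)⌉ : ℝ) : EReal)

/-- `δᵢ(x) = Hᵢ(x) − |x|ᵢ`, as an extended real. -/
noncomputable def deltaI {i : ℕ} (U : Machine i) (x : Str i) : EReal :=
  (Hc U x : EReal) - ((x.length : ℝ) : EReal)


set_option linter.unusedSectionVars false
set_option maxHeartbeats 1000000

namespace Stmt2Aux

/-- value of a base-`b` string as a natural number (big-endian). -/
def strVal {b : ℕ} (x : Str b) : ℕ := x.foldl (fun n d => n * b + d.val) 0

lemma foldl_val {b : ℕ} (x : Str b) (n : ℕ) :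
    x.foldl (fun n d => n * b + d.val) n = n * b ^ x.length + strVal x := by
  induction x generalizing n with
  | nil => simp [strVal]
  | cons d x ih =>
    simp only [List.foldl_cons, List.length_cons, strVal]
    rw [ih, ih (0 * b + d.val)]
    ring

lemma strVal_cons {b : ℕ} (d : Fin b) (x : Str b) :
    strVal (d :: x) = d.val * b ^ x.length + strVal x := by
  have := foldl_val x (0 * b + d.val)
  simpa [strVal] using this

lemma strVal_append {b : ℕ} (x z : Str b) :
    strVal (x ++ z) = strVal x * b ^ z.length + strVal z := by
  simp only [strVal, List.foldl_append]
  exact foldl_val z _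

lemma strVal_lt {b : ℕ} (x : Str b) : strVal x < b ^ x.length := by
  induction x with
  | nil => simp [strVal]
  | cons d x ih =>
    rw [strVal_cons, List.length_cons, pow_succ']
    calc d.val * b ^ x.length + strVal x < d.val * b ^ x.length + b ^ x.length := by omega
    _ = (d.val + 1) * b ^ x.length := by ring
    _ ≤ b * b ^ x.length := by
        have : d.val + 1 ≤ b := d.isLt
        exact Nat.mul_le_mul_right _ this

/-- the base-`b` string of length `L` with value `N` (big-endian). -/
def natToStr (b : ℕ) [NeZero b] : ℕ → ℕ → Str b
  | 0, _ => []
  | L + 1, N => natToStr b L (N / b) ++ [⟨N % b, Nat.mod_lt _ (Nat.pos_of_ne_zero (NeZero.ne b))⟩]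

@[simp] lemma length_natToStr (b : ℕ) [NeZero b] (L N : ℕ) :
    (natToStr b L N).length = L := by
  induction L generalizing N with
  | zero => rfl
  | succ L ih => simp [natToStr, ih]

lemma strVal_natToStr (b : ℕ) [NeZero b] {L N : ℕ} (h : N < b ^ L) :
    strVal (natToStr b L N) = N := by
  induction L generalizing N with
  | zero =>
    have : N = 0 := Nat.lt_one_iff.1 (by simpa using h)
    simp [natToStr, strVal, this]
  | succ L ih =>
    have hb : 0 < b := Nat.pos_of_ne_zero (NeZero.ne b)
    have hdiv : N / b < b ^ L := by
      rw [Nat.div_lt_iff_lt_mul hb]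
      calc N < b ^ (L + 1) := h
      _ = b ^ L * b := by rw [pow_succ]
    rw [natToStr, strVal_append, ih hdiv]
    have : strVal [(⟨N % b, Nat.mod_lt _ hb⟩ : Fin b)] = N % b := by
      simp [strVal_cons, strVal]
    rw [this]
    simp only [List.length_singleton, pow_one]
    have h1 := Nat.div_add_mod N b
    have h2 : N / b * b = b * (N / b) := mul_comm _ _
    omega

lemma natToStr_strVal {b : ℕ} [NeZero b] (x : Str b) :
    natToStr b x.length (strVal x) = x := by
  induction x using List.reverseRecOn with
  | nil => rfl
  | append_singleton x d ih =>
    have hb : 0 < b := Nat.pos_of_ne_zero (NeZero.ne b)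
    have hd : d.val < b := d.isLt
    have hval : strVal (x ++ [d]) = strVal x * b + d.val := by
      rw [strVal_append]
      simp [strVal_cons, strVal]
    have hlen : (x ++ [d]).length = x.length + 1 := by simp
    rw [hlen, hval, natToStr]
    have h1 : (strVal x * b + d.val) / b = strVal x := by
      rw [mul_comm, Nat.mul_add_div hb, Nat.div_eq_of_lt hd, add_zero]
    have h2 : (strVal x * b + d.val) % b = d.val := by
      rw [mul_comm, Nat.mul_add_mod, Nat.mod_eq_of_lt hd]
    rw [h1, ih]
    congr 1
    simp [h2]


lemma strVal_inj {b : ℕ} [NeZero b] {x y : Str b} (hl : x.length = y.length)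
    (hv : strVal x = strVal y) : x = y := by
  rw [← natToStr_strVal x, ← natToStr_strVal y, hl, hv]

lemma prefix_iff {b : ℕ} [NeZero b] {x y : Str b} (hxy : x.length ≤ y.length) :
    x <+: y ↔ strVal x * b ^ (y.length - x.length) ≤ strVal y ∧
      strVal y < (strVal x + 1) * b ^ (y.length - x.length) := by
  constructor
  · rintro ⟨z, rfl⟩
    have hz := strVal_lt z
    rw [strVal_append]
    have hk : (x ++ z).length - x.length = z.length := by simp
    rw [hk]
    constructor
    · exact Nat.le_add_right _ _
    · calc strVal x * b ^ z.length + strVal z < strVal x * b ^ z.length + b ^ z.length := by omega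
      _ = (strVal x + 1) * b ^ z.length := by ring
  · rintro ⟨h1, h2⟩
    set k := y.length - x.length with hk
    have hy : y = y.take x.length ++ y.drop x.length := (List.take_append_drop _ _).symm
    have hlt : (y.take x.length).length = x.length := by
      rw [List.length_take]; omega
    have hld : (y.drop x.length).length = k := by
      rw [List.length_drop]
    have hv : strVal y = strVal (y.take x.length) * b ^ k + strVal (y.drop x.length) := by
      conv_lhs => rw [hy]
      rw [strVal_append, hld]
    have hdlt : strVal (y.drop x.length) < b ^ k := by
      have := strVal_lt (y.drop x.length); rwa [hld] at this
    have hbk : 0 < b ^ k := Nat.pow_pos (Nat.pos_of_ne_zero (NeZero.ne b))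
    have heq : strVal (y.take x.length) = strVal x := by
      have hA : strVal x * b ^ k < (strVal (y.take x.length) + 1) * b ^ k := by
        calc strVal x * b ^ k ≤ strVal y := h1
        _ = strVal (y.take x.length) * b ^ k + strVal (y.drop x.length) := hv
        _ < (strVal (y.take x.length) + 1) * b ^ k := by
            rw [add_mul, one_mul]; omega
      have hB : strVal (y.take x.length) * b ^ k < (strVal x + 1) * b ^ k := by
        calc strVal (y.take x.length) * b ^ k ≤ strVal y := by rw [hv]; omega
        _ < (strVal x + 1) * b ^ k := h2
      have := Nat.lt_of_mul_lt_mul_right hA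
      have := Nat.lt_of_mul_lt_mul_right hB
      omega
    have hx : y.take x.length = x := strVal_inj (by omega) heq
    refine ⟨y.drop x.length, ?_⟩
    rw [← hx, hlt]
    exact List.take_append_drop _ _

/-! ### the inter-alphabet encoding -/

/-- length of the base-`b` encoding of a base-`a` string of length `m`. -/
def encLen (a b m : ℕ) : ℕ := Nat.clog b (2 * a ^ m)

/-- value of the encoding. -/
def encVal (a b : ℕ) (p : Str a) : ℕ :=
  strVal p * b ^ encLen a b p.length / a ^ p.length + 1

/-- base-`b` encoding of a base-`a` string, an arithmetic-coding style map with
the property that the dyadic-type interval of `encStr p` is nested in that of `p`. -/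
def encStr (a b : ℕ) [NeZero b] (p : Str a) : Str b :=
  natToStr b (encLen a b p.length) (encVal a b p)

section EncFacts
variable {a b : ℕ} (ha : 2 ≤ a) (hb : 2 ≤ b)
include ha hb

lemma two_apow_le (m : ℕ) : 2 * a ^ m ≤ b ^ encLen a b m :=
  Nat.le_pow_clog hb _

lemma encLen_pos (m : ℕ) : 1 ≤ encLen a b m := by
  by_contra h
  have h0 : encLen a b m = 0 := by omega
  have := two_apow_le ha hb m
  rw [h0, pow_zero] at this
  have : 0 < a ^ m := Nat.pow_pos (by omega)
  omega

lemma pow_pred_encLen_lt (m : ℕ) : b ^ (encLen a b m - 1) < 2 * a ^ m := by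
  have h1 : 1 < 2 * a ^ m := by
    have : 0 < a ^ m := Nat.pow_pos (by omega)
    omega
  exact Nat.pow_pred_clog_lt_self hb h1

lemma encVal_pos (p : Str a) : 1 ≤ encVal a b p := Nat.le_add_left _ _

lemma encVal_mul_gt (p : Str a) :
    strVal p * b ^ encLen a b p.length < encVal a b p * a ^ p.length := by
  have hap : 0 < a ^ p.length := Nat.pow_pos (by omega)
  rw [encVal]
  set X := strVal p * b ^ encLen a b p.length with hX
  set D := a ^ p.length with hD
  have h1 := Nat.div_add_mod X D
  have h2 : X % D < D := Nat.mod_lt _ hap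
  have h3 : (X / D + 1) * D = D * (X / D) + D := by ring
  omega

lemma encVal_succ_mul_le (p : Str a) :
    (encVal a b p + 1) * a ^ p.length ≤ (strVal p + 1) * b ^ encLen a b p.length := by
  have h1 : strVal p * b ^ encLen a b p.length / a ^ p.length * a ^ p.length
      ≤ strVal p * b ^ encLen a b p.length := Nat.div_mul_le_self _ _
  have h2 := two_apow_le ha hb p.length
  calc (encVal a b p + 1) * a ^ p.length
      = strVal p * b ^ encLen a b p.length / a ^ p.length * a ^ p.length
        + 2 * a ^ p.length := by rw [encVal]; ring
  _ ≤ strVal p * b ^ encLen a b p.length + b ^ encLen a b p.length := by omega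
  _ = (strVal p + 1) * b ^ encLen a b p.length := by ring

lemma encVal_lt (p : Str a) : encVal a b p < b ^ encLen a b p.length := by
  have hap : 0 < a ^ p.length := Nat.pow_pos (by omega)
  have h1 := encVal_succ_mul_le ha hb p
  have h2 : strVal p + 1 ≤ a ^ p.length := strVal_lt p
  have h3 : (encVal a b p + 1) * a ^ p.length ≤ a ^ p.length * b ^ encLen a b p.length := by
    calc (encVal a b p + 1) * a ^ p.length ≤ (strVal p + 1) * b ^ encLen a b p.length := h1
    _ ≤ a ^ p.length * b ^ encLen a b p.length := Nat.mul_le_mul_right _ h2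
  have h4 : encVal a b p + 1 ≤ b ^ encLen a b p.length := by
    by_contra h
    push_neg at h
    have : a ^ p.length * b ^ encLen a b p.length < (encVal a b p + 1) * a ^ p.length := by
      calc a ^ p.length * b ^ encLen a b p.length
          = b ^ encLen a b p.length * a ^ p.length := mul_comm _ _
      _ < (encVal a b p + 1) * a ^ p.length := Nat.mul_lt_mul_of_lt_of_le h (le_refl _) hap
    omega
  omega

end EncFacts

section EncStrFacts
variable {a b : ℕ} [NeZero b] (ha : 2 ≤ a) (hb : 2 ≤ b)

@[simp] lemma length_encStr (p : Str a) :
    (encStr a b p).length = encLen a b p.length := length_natToStr _ _ _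

include ha hb

lemma strVal_encStr (p : Str a) : strVal (encStr a b p) = encVal a b p :=
  strVal_natToStr _ (encVal_lt ha hb p)

/-- key combinatorial fact: if the encodings are prefix-comparable then so are the
original strings. -/
lemma encStr_prefix_cases {p p' : Str a} (h : encStr a b p <+: encStr a b p') :
    p <+: p' ∨ p' <+: p := by
  haveI : NeZero a := ⟨by omega⟩
  set m := p.length
  set m' := p'.length
  set v := strVal p with hv
  set v' := strVal p' with hv'
  set N := encVal a b p with hN
  set N' := encVal a b p' with hN'
  set L := encLen a b m with hL
  set L' := encLen a b m' with hL'
  have hlen : L ≤ L' := by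
    have := h.length_le
    simpa using this
  have hKsum : L + (L' - L) = L' := by omega
  have hpre := (prefix_iff (x := encStr a b p) (y := encStr a b p') (by simpa using hlen)).1 h
  rw [strVal_encStr ha hb, strVal_encStr ha hb] at hpre
  have hlenE : (encStr a b p').length - (encStr a b p).length = L' - L := by simp [L, L', m, m']
  rw [hlenE] at hpre
  obtain ⟨hp1, hp2⟩ := hpre
  have n1 := encVal_mul_gt ha hb p
  have n2 := encVal_succ_mul_le ha hb p
  have n1' := encVal_mul_gt ha hb p'
  have n2' := encVal_succ_mul_le ha hb p'
  rw [← hv, ← hN, ← hL] at n1 n2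
  rw [← hv', ← hN', ← hL'] at n1' n2'
  have hbK : 0 < b ^ (L' - L) := Nat.pow_pos (by omega)
  have hbL' : 0 < b ^ L' := Nat.pow_pos (by omega)
  have haM : 0 < a ^ m := Nat.pow_pos (by omega)
  have haM' : 0 < a ^ m' := Nat.pow_pos (by omega)
  have hbsplit : b ^ L' = b ^ L * b ^ (L' - L) := by rw [← pow_add, hKsum]
  -- (A) v * b^L' ≤ N' * a^m
  have hA : v * b ^ L' ≤ N' * a ^ m := by
    calc v * b ^ L' = v * b ^ L * b ^ (L' - L) := by rw [hbsplit]; ring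
    _ ≤ N * a ^ m * b ^ (L' - L) := Nat.mul_le_mul_right _ (le_of_lt n1)
    _ = N * b ^ (L' - L) * a ^ m := by ring
    _ ≤ N' * a ^ m := Nat.mul_le_mul_right _ hp1
  -- (B) N' * a^m < (v+1) * b^L'
  have hB : N' * a ^ m < (v + 1) * b ^ L' := by
    calc N' * a ^ m < (N + 1) * b ^ (L' - L) * a ^ m :=
          Nat.mul_lt_mul_of_lt_of_le hp2 (le_refl _) haM
    _ = (N + 1) * a ^ m * b ^ (L' - L) := by ring
    _ ≤ (v + 1) * b ^ L * b ^ (L' - L) := Nat.mul_le_mul_right _ n2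
    _ = (v + 1) * b ^ L' := by rw [hbsplit]; ring
  -- (C) v' * b^L' < N' * a^m'
  have hC : v' * b ^ L' < N' * a ^ m' := n1'
  -- (D) N' * a^m' < (v'+1) * b^L'
  have hD : N' * a ^ m' < (v' + 1) * b ^ L' := by
    calc N' * a ^ m' < (N' + 1) * a ^ m' :=
          Nat.mul_lt_mul_of_lt_of_le (by omega) (le_refl _) haM'
    _ ≤ (v' + 1) * b ^ L' := n2'
  rcases le_total m m' with hm | hm
  · have hasplit : a ^ m' = a ^ m * a ^ (m' - m) := by rw [← pow_add]; congr 1; omega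
    refine Or.inl ((prefix_iff hm).2 ⟨?_, ?_⟩)
    · -- v * a^(m'-m) ≤ v'
      have key : v * a ^ (m' - m) * (a ^ m * b ^ L') < (v' + 1) * (a ^ m * b ^ L') := by
        calc v * a ^ (m' - m) * (a ^ m * b ^ L') = v * b ^ L' * a ^ m' := by
              rw [hasplit]; ring
        _ ≤ N' * a ^ m * a ^ m' := Nat.mul_le_mul_right _ hA
        _ = N' * a ^ m' * a ^ m := by ring
        _ < (v' + 1) * b ^ L' * a ^ m :=
              Nat.mul_lt_mul_of_lt_of_le hD (le_refl _) haM
        _ = (v' + 1) * (a ^ m * b ^ L') := by ring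
      exact Nat.lt_succ_iff.mp (Nat.lt_of_mul_lt_mul_right key)
    · -- v' < (v+1) * a^(m'-m)
      have key : v' * (a ^ m * b ^ L') < (v + 1) * a ^ (m' - m) * (a ^ m * b ^ L') := by
        calc v' * (a ^ m * b ^ L') = v' * b ^ L' * a ^ m := by ring
        _ < N' * a ^ m' * a ^ m := Nat.mul_lt_mul_of_lt_of_le hC (le_refl _) haM
        _ = N' * a ^ m * a ^ m' := by ring
        _ < (v + 1) * b ^ L' * a ^ m' := Nat.mul_lt_mul_of_lt_of_le hB (le_refl _) haM'
        _ = (v + 1) * a ^ (m' - m) * (a ^ m * b ^ L') := by rw [hasplit]; ring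
      exact Nat.lt_of_mul_lt_mul_right key
  · have hasplit : a ^ m = a ^ m' * a ^ (m - m') := by rw [← pow_add]; congr 1; omega
    refine Or.inr ((prefix_iff hm).2 ⟨?_, ?_⟩)
    · -- v' * a^(m-m') ≤ v
      have key : v' * a ^ (m - m') * (a ^ m' * b ^ L') < (v + 1) * (a ^ m' * b ^ L') := by
        calc v' * a ^ (m - m') * (a ^ m' * b ^ L') = v' * b ^ L' * a ^ m := by
              rw [hasplit]; ring
        _ < N' * a ^ m' * a ^ m := Nat.mul_lt_mul_of_lt_of_le hC (le_refl _) haM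
        _ = N' * a ^ m * a ^ m' := by ring
        _ < (v + 1) * b ^ L' * a ^ m' := Nat.mul_lt_mul_of_lt_of_le hB (le_refl _) haM'
        _ = (v + 1) * (a ^ m' * b ^ L') := by ring
      exact Nat.lt_succ_iff.mp (Nat.lt_of_mul_lt_mul_right key)
    · -- v < (v'+1) * a^(m-m')
      have key : v * (a ^ m' * b ^ L') < (v' + 1) * a ^ (m - m') * (a ^ m' * b ^ L') := by
        calc v * (a ^ m' * b ^ L') = v * b ^ L' * a ^ m' := by ring
        _ ≤ N' * a ^ m * a ^ m' := Nat.mul_le_mul_right _ hA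
        _ = N' * a ^ m' * a ^ m := by ring
        _ < (v' + 1) * b ^ L' * a ^ m :=
              Nat.mul_lt_mul_of_lt_of_le hD (le_refl _) haM
        _ = (v' + 1) * a ^ (m - m') * (a ^ m' * b ^ L') := by rw [hasplit]; ring
      exact Nat.lt_of_mul_lt_mul_right key

end EncStrFacts


/-- decidable graph relation characterising `y = encStr a b p`. -/
def encRel (a b : ℕ) (p : Str a) (y : Str b) : Prop :=
  2 * a ^ p.length ≤ b ^ y.length ∧ b ^ (y.length - 1) < 2 * a ^ p.length ∧
    strVal y = strVal p * b ^ y.length / a ^ p.length + 1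

instance {a b : ℕ} (p : Str a) (y : Str b) : Decidable (encRel a b p y) := by
  unfold encRel; infer_instance

lemma encRel_iff {a b : ℕ} [NeZero b] (ha : 2 ≤ a) (hb : 2 ≤ b) (p : Str a) (y : Str b) :
    encRel a b p y ↔ y = encStr a b p := by
  constructor
  · rintro ⟨h1, h2, h3⟩
    have hylen : y.length = encLen a b p.length := by
      have hle : encLen a b p.length ≤ y.length :=
        (Nat.clog_le_iff_le_pow hb).symm.1 h1
      have hpos : y.length ≠ 0 := by
        intro h0
        rw [h0, pow_zero] at h1
        have : 0 < a ^ p.length := Nat.pow_pos (by omega)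
        omega
      have hge : y.length ≤ encLen a b p.length := by
        by_contra hcon
        push_neg at hcon
        have : encLen a b p.length ≤ y.length - 1 := by omega
        have := (Nat.clog_le_iff_le_pow hb).symm.2 this
        omega
      omega
    have hyval : strVal y = encVal a b p := by
      rw [h3, hylen]; rfl
    rw [← natToStr_strVal y, hylen, hyval]
    rfl
  · rintro rfl
    refine ⟨?_, ?_, ?_⟩
    · rw [length_encStr]
      exact two_apow_le ha hb _
    · rw [length_encStr]
      exact pow_pred_encLen_lt ha hb _
    · rw [strVal_encStr ha hb, length_encStr]
      rfl

/-! ### generic dovetailed search -/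

/-- search for some `p : β` together with a witness `t : ℕ` with `R p t = true`. -/
def search {β : Type} [Primcodable β] (R : β → ℕ → Bool) : Part β :=
  Nat.rfindOpt fun k => (Encodable.decode (α := β) k.unpair.2).bind
    fun p => cond (R p k.unpair.1) (some p) none

lemma search_spec {β : Type} [Primcodable β] {R : β → ℕ → Bool} {x : β}
    (h : x ∈ search R) : ∃ t, R x t = true := by
  obtain ⟨k, hk⟩ := Nat.rfindOpt_spec h
  simp only [Option.mem_def, Option.bind_eq_some_iff] at hk
  obtain ⟨p, hp, hcond⟩ := hk
  rcases hR : R p k.unpair.1 with _ | _ <;> rw [hR] at hcond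
  · simp at hcond
  · simp at hcond
    subst hcond
    exact ⟨_, hR⟩

lemma search_dom {β : Type} [Primcodable β] {R : β → ℕ → Bool} {p : β} {t : ℕ}
    (h : R p t = true) : (search R).Dom := by
  refine Nat.rfindOpt_dom.2 ⟨Nat.pair t (Encodable.encode p), p, ?_⟩
  simp [Nat.unpair_pair, Encodable.encodek, h]

lemma mem_search_of_unique {β : Type} [Primcodable β] {R : β → ℕ → Bool} {p₀ : β} {t : ℕ}
    (hex : R p₀ t = true) (huniq : ∀ p t', R p t' = true → p = p₀) : p₀ ∈ search R := by
  have hdom : (search R).Dom := search_dom hex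
  have hmem : (search R).get hdom ∈ search R := Part.get_mem hdom
  obtain ⟨t', ht'⟩ := search_spec hmem
  have := huniq _ _ ht'
  rwa [this] at hmem

lemma search_partrec {α β : Type} [Primcodable α] [Primcodable β] {R : α → β → ℕ → Bool}
    (hR : Computable fun x : α × β × ℕ => R x.1 x.2.1 x.2.2) :
    Partrec fun a => search (R a) := by
  apply Partrec.rfindOpt
  apply Computable.option_bind
  · exact Computable.decode.comp
      ((Computable.snd.comp (Computable.unpair.comp Computable.snd)))
  · apply Computable.cond
    · exact hR.comp (((Computable.fst.comp Computable.fst).pair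
        (Computable.snd.pair ((Computable.fst.comp
          (Computable.unpair.comp (Computable.snd.comp Computable.fst)))))))
    · exact Computable.option_some.comp Computable.snd
    · exact Computable.const _

/-! ### complexity basics -/

lemma Hc_le_of_mem {j : ℕ} {T : Machine j} {x y : Str j} (h : x ∈ T.f y) :
    Hc T x ≤ (y.length : ℝ≥0∞) :=
  sInf_le ⟨y, rfl, h⟩

lemma Hc_attained {j : ℕ} {T : Machine j} {x : Str j} (h : Hc T x ≠ ⊤) :
    ∃ y : Str j, x ∈ T.f y ∧ Hc T x = (y.length : ℝ≥0∞) ∧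
      ∀ z : Str j, x ∈ T.f z → y.length ≤ z.length := by
  have hne : {n : ℝ≥0∞ | ∃ y : Str j, (y.length : ℝ≥0∞) = n ∧ x ∈ T.f y}.Nonempty := by
    by_contra hcon
    rw [Set.not_nonempty_iff_eq_empty] at hcon
    rw [Hc, hcon, sInf_empty] at h
    exact h rfl
  obtain ⟨e, y0, hy0, hmem0⟩ := hne
  have hS' : {k : ℕ | ∃ y : Str j, y.length = k ∧ x ∈ T.f y}.Nonempty := ⟨y0.length, y0, rfl, hmem0⟩
  obtain ⟨y, hylen, hy⟩ := Nat.sInf_mem hS'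
  refine ⟨y, hy, ?_, ?_⟩
  · apply le_antisymm
    · exact Hc_le_of_mem hy
    · apply le_sInf
      rintro e' ⟨z, rfl, hz⟩
      have : sInf {k : ℕ | ∃ y : Str j, y.length = k ∧ x ∈ T.f y} ≤ z.length :=
        Nat.sInf_le ⟨z, rfl, hz⟩
      exact_mod_cast hylen ▸ this
  · intro z hz
    have : sInf {k : ℕ | ∃ y : Str j, y.length = k ∧ x ∈ T.f y} ≤ z.length :=
      Nat.sInf_le ⟨z, rfl, hz⟩
    omega

/-- the trivial machine mapping the empty string to `u`. -/
noncomputable def constMachine {j : ℕ} (u : Str j) : Machine j where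
  f := fun y => ((if y = [] then some u else none : Option (Str j)) : Part (Str j))
  partrec := by
    apply Computable.ofOption
    have hpred : PrimrecPred (fun y : Str j => y = []) :=
      Primrec.eq.comp Primrec.id (Primrec.const _)
    exact (Primrec.ite hpred (Primrec.const (some u)) (Primrec.const none)).to_comp
  prefixFree := by
    intro x hx y hy _
    have hxe : x = [] := by
      by_contra hcon
      replace hx := (PFun.mem_dom _ _).1 hx
      obtain ⟨v, hv⟩ := hx
      rw [if_neg hcon] at hv
      simp at hv
    have hye : y = [] := by
      by_contra hcon
      replace hy := (PFun.mem_dom _ _).1 hy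
      obtain ⟨v, hv⟩ := hy
      rw [if_neg hcon] at hv
      simp at hv
    rw [hxe, hye]

lemma Hc_ne_top {j : ℕ} {U : Machine j} (hU : IsUniversal U) (u : Str j) :
    Hc U u ≠ ⊤ := by
  obtain ⟨c, hc⟩ := hU (constMachine u)
  have h1 : u ∈ (constMachine u).f [] := by
    simp [constMachine]
  have h2 : Hc (constMachine u) u ≤ (([] : Str j).length : ℝ≥0∞) := Hc_le_of_mem h1
  have h3 : Hc U u ≤ 0 + c := le_trans (hc u) (by
    apply add_le_add_left
    simpa using h2)
  intro htop
  rw [htop] at h3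
  simp at h3

/-! ### time-bounded halting for partrec functions -/

lemma exists_haltingCode {γ : Type} [Primcodable γ] {h : γ →. γ} (hh : Partrec h) :
    ∃ c : Nat.Partrec.Code, ∀ u : γ,
      (h u).Dom ↔ ∃ t, (Nat.Partrec.Code.evaln t c (Encodable.encode u)).isSome := by
  obtain ⟨c, hc⟩ := Nat.Partrec.Code.exists_code.1 hh
  refine ⟨c, fun u => ?_⟩
  have heval : Nat.Partrec.Code.eval c (Encodable.encode u) = (h u).map Encodable.encode := by
    rw [hc]
    simp [Encodable.encodek]
  constructor
  · intro hdom
    obtain ⟨v, hv⟩ := Part.dom_iff_mem.1 hdom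
    have : Encodable.encode v ∈ Nat.Partrec.Code.eval c (Encodable.encode u) := by
      rw [heval]; exact Part.mem_map _ hv
    obtain ⟨t, ht⟩ := Nat.Partrec.Code.evaln_complete.1 this
    exact ⟨t, by rw [Option.isSome_iff_exists]; exact ⟨_, ht⟩⟩
  · rintro ⟨t, ht⟩
    rw [Option.isSome_iff_exists] at ht
    obtain ⟨v, hv⟩ := ht
    have : v ∈ Nat.Partrec.Code.eval c (Encodable.encode u) :=
      Nat.Partrec.Code.evaln_sound hv
    rw [heval] at this
    obtain ⟨w, hw, _⟩ := (Part.mem_map_iff _).1 this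
    exact Part.dom_iff_mem.2 ⟨w, hw⟩

/-! ### primitive recursiveness of the encoding relation -/

lemma primrec_pow : Primrec₂ (· ^ · : ℕ → ℕ → ℕ) :=
  Primrec₂.unpaired'.1 Nat.Primrec.pow

lemma primrec_strVal {b : ℕ} : Primrec (strVal (b := b)) := by
  have h : Primrec₂ (fun (_ : Str b) (p : ℕ × Fin b) => p.1 * b + p.2.val) :=
    (Primrec.nat_add.comp
      (Primrec.nat_mul.comp (Primrec.fst.comp Primrec.snd) (Primrec.const b))
      (Primrec.fin_val.comp (Primrec.snd.comp Primrec.snd))).to₂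
  exact (Primrec.list_foldl Primrec.id (Primrec.const 0) h).of_eq fun x => rfl

lemma primrec_encRel (a b : ℕ) : PrimrecRel (encRel a b) := by
  have hm : Primrec fun x : Str a × Str b => 2 * a ^ x.1.length :=
    Primrec.nat_mul.comp (Primrec.const 2)
      (primrec_pow.comp (Primrec.const a) (Primrec.list_length.comp Primrec.fst))
  have hbl : Primrec fun x : Str a × Str b => b ^ x.2.length :=
    primrec_pow.comp (Primrec.const b) (Primrec.list_length.comp Primrec.snd)
  have h1 : PrimrecPred fun x : Str a × Str b => 2 * a ^ x.1.length ≤ b ^ x.2.length :=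
    Primrec.nat_le.comp hm hbl
  have h2 : PrimrecPred fun x : Str a × Str b => b ^ (x.2.length - 1) < 2 * a ^ x.1.length :=
    Primrec.nat_lt.comp
      (primrec_pow.comp (Primrec.const b)
        (Primrec.nat_sub.comp (Primrec.list_length.comp Primrec.snd) (Primrec.const 1))) hm
  have h3 : PrimrecPred fun x : Str a × Str b =>
      strVal x.2 = strVal x.1 * b ^ x.2.length / a ^ x.1.length + 1 :=
    Primrec.eq.comp (primrec_strVal.comp Primrec.snd)
      (Primrec.nat_add.comp
        (Primrec.nat_div.comp
          (Primrec.nat_mul.comp (primrec_strVal.comp Primrec.fst) hbl)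
          (primrec_pow.comp (Primrec.const a) (Primrec.list_length.comp Primrec.fst)))
        (Primrec.const 1))
  exact h1.and (h2.and h3)

lemma primrec_band : Primrec₂ (· && ·) :=
  (Primrec.cond Primrec.fst Primrec.snd (Primrec.const false)).of_eq fun p => by
    cases p.1 <;> rfl

/-! ### the simulation machine -/

open Nat.Partrec.Code in
/-- given a machine `U` over alphabet `a`, a target alphabet `j` and a computable
partial postprocessing map `F`, there is a machine over alphabet `j` which on input
`encStr a j p` outputs `F (U p)`. -/
lemma mkSim {a j : ℕ} [NeZero j] (ha : 2 ≤ a) (hj : 2 ≤ j) (U : Machine a)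
    (F : Str a →. Str j) (hF : Partrec F) :
    ∃ T : Machine j, ∀ p u, u ∈ U.f p → ∀ w, w ∈ F u → w ∈ T.f (encStr a j p) := by
  obtain ⟨c, hc⟩ := exists_haltingCode U.partrec
  set R : Str j → Str a → ℕ → Bool := fun y p t =>
    decide (encRel a j p y) && (evaln t c (Encodable.encode p)).isSome with hRdef
  have hRtrue : ∀ y p t, R y p t = true ↔
      (encRel a j p y ∧ (evaln t c (Encodable.encode p)).isSome = true) := by
    intro y p t
    simp [hRdef]
  have hRcomp : Computable fun x : Str j × Str a × ℕ => R x.1 x.2.1 x.2.2 := by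
    have hb1 : Primrec fun x : Str j × Str a × ℕ => decide (encRel a j x.2.1 x.1) :=
      (primrec_encRel a j).comp (Primrec.fst.comp Primrec.snd) Primrec.fst |>.decide
    have hb2 : Primrec fun x : Str j × Str a × ℕ =>
        (evaln x.2.2 c (Encodable.encode x.2.1)).isSome :=
      Primrec.option_isSome.comp (primrec_evaln.comp
        (((Primrec.snd.comp Primrec.snd).pair (Primrec.const c)).pair
          (Primrec.encode.comp (Primrec.fst.comp Primrec.snd))))
    exact (primrec_band.comp hb1 hb2).to_comp
  have hfp : Partrec fun y : Str j => (search (R y)).bind fun p => (U.f p).bind F := by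
    apply Partrec.bind (search_partrec hRcomp)
    exact (Partrec.bind (U.partrec.comp Computable.snd) ((hF.comp Computable.snd).to₂)).to₂
  have hpf : PrefixFree (PFun.Dom fun y : Str j => (search (R y)).bind fun p => (U.f p).bind F) := by
    intro x hx y hy hpre
    replace hx := (PFun.mem_dom _ _).1 hx; replace hy := (PFun.mem_dom _ _).1 hy
    obtain ⟨v, hv⟩ := hx
    obtain ⟨w, hw⟩ := hy
    rw [Part.mem_bind_iff] at hv hw
    obtain ⟨p, hp, hrest⟩ := hv
    obtain ⟨p', hp', hrest'⟩ := hw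
    obtain ⟨t, ht⟩ := search_spec hp
    obtain ⟨t', ht'⟩ := search_spec hp'
    obtain ⟨he, _⟩ := (hRtrue _ _ _).1 ht
    obtain ⟨he', _⟩ := (hRtrue _ _ _).1 ht'
    have hxe : x = encStr a j p := (encRel_iff ha hj _ _).1 he
    have hye : y = encStr a j p' := (encRel_iff ha hj _ _).1 he'
    obtain ⟨u, hu, _⟩ := Part.mem_bind_iff.1 hrest
    obtain ⟨u', hu', _⟩ := Part.mem_bind_iff.1 hrest'
    have hdp : p ∈ U.f.Dom := (PFun.mem_dom _ _).2 ⟨u, hu⟩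
    have hdp' : p' ∈ U.f.Dom := (PFun.mem_dom _ _).2 ⟨u', hu'⟩
    rw [hxe, hye] at hpre
    rcases encStr_prefix_cases ha hj hpre with hcase | hcase
    · rw [hxe, hye, U.prefixFree p hdp p' hdp' hcase]
    · rw [hxe, hye, U.prefixFree p' hdp' p hdp hcase]
  refine ⟨⟨_, hfp, hpf⟩, ?_⟩
  intro p u hu w hw
  have hdomp : (U.f p).Dom := Part.dom_iff_mem.2 ⟨u, hu⟩
  obtain ⟨t, ht⟩ := (hc p).1 hdomp
  have hex : R (encStr a j p) p t = true :=
    (hRtrue _ _ _).2 ⟨(encRel_iff ha hj p (encStr a j p)).2 rfl, ht⟩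
  have huniq : ∀ p' t', R (encStr a j p) p' t' = true → p' = p := by
    intro p' t' h'
    obtain ⟨h1, h2⟩ := (hRtrue _ _ _).1 h'
    have heq : encStr a j p' = encStr a j p := ((encRel_iff ha hj _ _).1 h1).symm
    have hdom' : (U.f p').Dom := (hc p').2 ⟨t', h2⟩
    have hpre : encStr a j p' <+: encStr a j p := heq ▸ List.prefix_refl _
    have hdp : p ∈ U.f.Dom := hdomp
    have hdp' : p' ∈ U.f.Dom := hdom'
    rcases encStr_prefix_cases ha hj hpre with hcase | hcase
    · exact U.prefixFree p' hdp' p hdp hcase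
    · exact (U.prefixFree p hdp p' hdp' hcase).symm
  have hpmem : p ∈ search (R (encStr a j p)) := mem_search_of_unique hex huniq
  exact Part.mem_bind_iff.2 ⟨p, hpmem, Part.mem_bind_iff.2 ⟨u, hu, hw⟩⟩

/-! ### numeric estimates on `encLen` -/

lemma one_le_logb {a : ℕ} (ha : 2 ≤ a) : 1 ≤ Real.logb 2 a := by
  rw [Real.le_logb_iff_rpow_le (by norm_num) (by positivity)]
  rw [Real.rpow_one]
  exact_mod_cast ha

lemma encLen_le_real {a : ℕ} (ha : 2 ≤ a) (m : ℕ) :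
    (encLen a 2 m : ℝ) ≤ Real.logb 2 a * m + 2 := by
  have hl := one_le_logb ha
  have hnn : 0 ≤ Real.logb 2 a * m := by positivity
  set t := ⌈Real.logb 2 a * m⌉₊ with htdef
  have hpow : (a : ℕ) ^ m ≤ 2 ^ t := by
    have hr : ((a : ℝ)) ^ m ≤ 2 ^ t := by
      have h1 : (2 : ℝ) ^ (Real.logb 2 a * m) = ((a : ℝ)) ^ m := by
        rw [Real.rpow_mul (by norm_num), Real.rpow_logb (by norm_num) (by norm_num)
          (by positivity), Real.rpow_natCast]
      have h2 : (2 : ℝ) ^ (Real.logb 2 a * m) ≤ (2 : ℝ) ^ (t : ℝ) :=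
        Real.rpow_le_rpow_of_exponent_le (by norm_num) (Nat.le_ceil _)
      rw [← h1]
      calc (2 : ℝ) ^ (Real.logb 2 a * m) ≤ (2 : ℝ) ^ (t : ℝ) := h2
      _ = (2 : ℝ) ^ t := Real.rpow_natCast 2 t
    have := hr
    exact_mod_cast (by push_cast; exact hr : ((a ^ m : ℕ) : ℝ) ≤ ((2 ^ t : ℕ) : ℝ))
  have hclog : encLen a 2 m ≤ t + 1 := by
    rw [encLen, Nat.clog_le_iff_le_pow (by norm_num)]
    calc 2 * a ^ m ≤ 2 * 2 ^ t := by omega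
    _ = 2 ^ (t + 1) := by ring
  have htle : (t : ℝ) ≤ Real.logb 2 a * m + 1 := (Nat.ceil_lt_add_one hnn).le
  calc (encLen a 2 m : ℝ) ≤ (t : ℝ) + 1 := by exact_mod_cast hclog
  _ ≤ Real.logb 2 a * m + 2 := by linarith

lemma logb_mul_encLen_le {a : ℕ} (ha : 2 ≤ a) (m : ℕ) :
    Real.logb 2 a * (encLen 2 a m : ℝ) ≤ (m : ℝ) + 1 + Real.logb 2 a := by
  have hl := one_le_logb ha
  set L := encLen 2 a m with hLdef
  have hL1 : 1 ≤ L := encLen_pos (by norm_num) ha m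
  have hlt : a ^ (L - 1) < 2 ^ (m + 1) := by
    have := pow_pred_encLen_lt (a := 2) (b := a) (by norm_num) ha m
    calc a ^ (L - 1) < 2 * 2 ^ m := this
    _ = 2 ^ (m + 1) := by ring
  have hrlt : ((L : ℝ) - 1) * Real.logb 2 a < (m : ℝ) + 1 := by
    have hcast : ((a : ℝ)) ^ (L - 1) < (2 : ℝ) ^ (m + 1) := by
      exact_mod_cast hlt
    have hlog := Real.logb_lt_logb (by norm_num : (1:ℝ) < 2) (by positivity) hcast
    rw [Real.logb_pow, Real.logb_pow] at hlog
    rw [Real.logb_self_eq_one (by norm_num)] at hlog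
    have hLcast : ((L - 1 : ℕ) : ℝ) = (L : ℝ) - 1 := by
      have : (1 : ℕ) ≤ L := hL1
      push_cast [Nat.cast_sub this]
      ring
    rw [hLcast] at hlog
    push_cast at hlog
    linarith
  nlinarith [hrlt, hl]

end Stmt2Aux


/-- For a c.e. set `A` and a Gödel numbering `g : A → X₂*`, there is a constant `d`
with `|δ_g(u) − log₂(i)·δᵢ(u)| ≤ d` for all `u ∈ A`
(the absolute difference is expressed by the two inequalities). -/
theorem stmt_2 {i : ℕ} (hi : 2 ≤ i) (Ui : Machine i) (hUi : IsUniversal Ui)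
    (U2 : Machine 2) (hU2 : IsUniversal U2)
    (A : Set (Str i)) (hA : CEset A) (g : Str i → Str 2) (hg : GoedelNumbering A g) :
    ∃ d : ℝ, 0 < d ∧ ∀ u ∈ A,
      deltaG U2 g u ≤ ((Real.logb 2 i : ℝ) : EReal) * deltaI Ui u + ((d : ℝ) : EReal) ∧
      ((Real.logb 2 i : ℝ) : EReal) * deltaI Ui u ≤ deltaG U2 g u + ((d : ℝ) : EReal) := by
  classical
  obtain ⟨hgc, hginj⟩ := hg
  obtain ⟨h, hhp, hAdom⟩ := hA
  haveI : NeZero i := ⟨by omega⟩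
  have hl1 : 1 ≤ Real.logb 2 i := Stmt2Aux.one_le_logb hi
  -- the binary machine simulating `Ui` followed by `g`
  obtain ⟨T2, hT2⟩ := Stmt2Aux.mkSim hi (by norm_num) Ui (fun v => Part.some (g v)) hgc
  -- the partial inverse of `g` on `A`, by dovetailed search
  obtain ⟨ch, hch⟩ := Stmt2Aux.exists_haltingCode hhp
  set invG : Str 2 →. Str i := fun w => Stmt2Aux.search
    (fun u t => (Nat.Partrec.Code.evaln t ch (Encodable.encode u)).isSome
      && decide (g u = w)) with hinvGdef
  have hinvG_partrec : Partrec invG := by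
    apply Stmt2Aux.search_partrec
    have hb1 : Computable fun x : Str 2 × Str i × ℕ =>
        (Nat.Partrec.Code.evaln x.2.2 ch (Encodable.encode x.2.1)).isSome :=
      (Primrec.option_isSome.comp (Nat.Partrec.Code.primrec_evaln.comp
        (((Primrec.snd.comp Primrec.snd).pair (Primrec.const ch)).pair
          (Primrec.encode.comp (Primrec.fst.comp Primrec.snd))))).to_comp
    have hb2 : Computable fun x : Str 2 × Str i × ℕ => decide (g x.2.1 = x.1) :=
      Primrec.eq.decide.to_comp.comp (hgc.comp (Computable.fst.comp Computable.snd)) Computable.fst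
    exact Stmt2Aux.primrec_band.to_comp.comp hb1 hb2
  have hAiff : ∀ v : Str i, v ∈ A ↔ (h v).Dom := by
    intro v
    rw [hAdom]
    rfl
  have hinvG_mem : ∀ u ∈ A, u ∈ invG (g u) := by
    intro u hu
    obtain ⟨t, ht⟩ := (hch u).1 ((hAiff u).1 hu)
    have hex : ((Nat.Partrec.Code.evaln t ch (Encodable.encode u)).isSome
        && decide (g u = g u)) = true := by simp [ht]
    refine Stmt2Aux.mem_search_of_unique hex ?_
    intro u' t' h'
    rw [Bool.and_eq_true] at h'
    obtain ⟨h1, h2⟩ := h'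
    have hu' : u' ∈ A := (hAiff u').2 ((hch u').2 ⟨t', h1⟩)
    have : g u' = g u := of_decide_eq_true h2
    exact hginj hu' hu this
  -- the `i`-ary machine simulating `U2` followed by `invG`
  obtain ⟨Ti, hTi⟩ := Stmt2Aux.mkSim (by norm_num) hi U2 invG hinvG_partrec
  obtain ⟨c2, hc2⟩ := hU2 T2
  obtain ⟨c1, hc1⟩ := hUi Ti
  have hc1nn : (0:ℝ) ≤ (c1:ℝ) := Nat.cast_nonneg _
  have hc2nn : (0:ℝ) ≤ (c2:ℝ) := Nat.cast_nonneg _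
  have hlc1 : (0:ℝ) ≤ Real.logb 2 i * c1 := mul_nonneg (by linarith) hc1nn
  refine ⟨2 + c2 + Real.logb 2 i * c1 + Real.logb 2 i + 1, by linarith, ?_⟩
  intro u hu
  -- minimal programs
  obtain ⟨p, hp, hHp, _⟩ := Stmt2Aux.Hc_attained (Stmt2Aux.Hc_ne_top hUi u)
  obtain ⟨q, hq, hHq, _⟩ := Stmt2Aux.Hc_attained (Stmt2Aux.Hc_ne_top hU2 (g u))
  set n := p.length with hndef
  set m := q.length with hmdef
  -- upper bound on H₂(g u)
  have hT2mem : g u ∈ T2.f (Stmt2Aux.encStr i 2 p) := hT2 p u hp (g u) (Part.mem_some _)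
  have hb2' : Hc T2 (g u) ≤ ((Stmt2Aux.encLen i 2 n : ℕ) : ℝ≥0∞) := by
    have := Stmt2Aux.Hc_le_of_mem hT2mem
    rwa [Stmt2Aux.length_encStr] at this
  have hmn : m ≤ Stmt2Aux.encLen i 2 n + c2 := by
    have hle : (m : ℝ≥0∞) ≤ ((Stmt2Aux.encLen i 2 n : ℕ) : ℝ≥0∞) + (c2 : ℝ≥0∞) := by
      rw [← hHq]
      exact le_trans (hc2 (g u)) (add_le_add_left hb2' _)
    exact_mod_cast hle
  -- upper bound on Hᵢ(u)
  have hTimem : u ∈ Ti.f (Stmt2Aux.encStr 2 i q) := hTi q (g u) hq u (hinvG_mem u hu)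
  have hb1' : Hc Ti u ≤ ((Stmt2Aux.encLen 2 i m : ℕ) : ℝ≥0∞) := by
    have := Stmt2Aux.Hc_le_of_mem hTimem
    rwa [Stmt2Aux.length_encStr] at this
  have hnm : n ≤ Stmt2Aux.encLen 2 i m + c1 := by
    have hle : (n : ℝ≥0∞) ≤ ((Stmt2Aux.encLen 2 i m : ℕ) : ℝ≥0∞) + (c1 : ℝ≥0∞) := by
      rw [← hHp]
      exact le_trans (hc1 u) (add_le_add_left hb1' _)
    exact_mod_cast hle
  -- real estimates
  have hR1 : (m : ℝ) ≤ Real.logb 2 i * n + (2 + c2) := by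
    have h1 := Stmt2Aux.encLen_le_real hi n
    have h2 : (m : ℝ) ≤ (Stmt2Aux.encLen i 2 n : ℝ) + c2 := by exact_mod_cast hmn
    linarith
  have hR2 : Real.logb 2 i * n ≤ (m : ℝ) + 1 + Real.logb 2 i + Real.logb 2 i * c1 := by
    have h1 := Stmt2Aux.logb_mul_encLen_le hi m
    have h2 : (n : ℝ) ≤ (Stmt2Aux.encLen 2 i m : ℝ) + c1 := by exact_mod_cast hnm
    calc Real.logb 2 i * n ≤ Real.logb 2 i * ((Stmt2Aux.encLen 2 i m : ℝ) + c1) :=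
          mul_le_mul_of_nonneg_left h2 (by linarith)
    _ = Real.logb 2 i * (Stmt2Aux.encLen 2 i m : ℝ) + Real.logb 2 i * c1 := by ring
    _ ≤ (m : ℝ) + 1 + Real.logb 2 i + Real.logb 2 i * c1 := by linarith
  -- rewrite the goal in terms of real numbers
  have hdg : deltaG U2 g u =
      (((m : ℝ) - (⌈Real.logb 2 i * (u.length : ℝ)⌉ : ℝ)) : EReal) := by
    have hmE : ((m : ℝ≥0∞) : EReal) = ((m : ℝ) : EReal) := by norm_cast
    rw [deltaG, hHq, hmE]
  have hdi : deltaI Ui u = (((n : ℝ) - (u.length : ℝ)) : EReal) := by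
    have hnE : ((n : ℝ≥0∞) : EReal) = ((n : ℝ) : EReal) := by norm_cast
    rw [deltaI, hHp, hnE]
  rw [hdg, hdi]
  have hceil1 : Real.logb 2 i * (u.length : ℝ) ≤ (⌈Real.logb 2 i * (u.length : ℝ)⌉ : ℝ) :=
    Int.le_ceil _
  have hceil2 : (⌈Real.logb 2 i * (u.length : ℝ)⌉ : ℝ) < Real.logb 2 i * (u.length : ℝ) + 1 :=
    Int.ceil_lt_add_one _
  constructor
  · rw [← EReal.coe_sub, ← EReal.coe_sub, ← EReal.coe_mul, ← EReal.coe_add,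
      EReal.coe_le_coe_iff]
    nlinarith [hR1, hceil1]
  · rw [← EReal.coe_sub, ← EReal.coe_sub, ← EReal.coe_mul, ← EReal.coe_add,
      EReal.coe_le_coe_iff]
    nlinarith [hR2, hceil2]
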